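/- arXiv:1102.4784 — 3 statements merged into one kernel-verified Lean document; each statement's English description precedes it below -/
import Mathlib

section
/- Every strongly open subset of the unit ball B¹(H) of B(H) is an Fσ set in the weak operator topology: it is a countable union of weakly closed sets. -/
open scoped ComplexInnerProductSpace Topology

lemma norm_le_iff_inner {H : Type*} [NormedAddCommGroup H] [InnerProductSpace ℂ H]
    (x : H) (c : ℝ) (hc : 0 ≤ c) : ‖x‖ ≤ c ↔ ∀ η : H, ‖⟪x, η⟫‖ ≤ c * ‖η‖ := by
  constructor
  · intro h η
    exact (norm_inner_le_norm x η).trans (mul_le_mul_of_nonneg_right h (norm_nonneg _))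
  · intro h
    rcases eq_or_ne ‖x‖ 0 with h0 | h0
    · simpa [h0] using hc
    · have h3 : ‖x‖ * ‖x‖ ≤ c * ‖x‖ := by
        simpa [inner_self_eq_norm_sq_to_K, norm_pow, sq] using h x
      exact le_of_mul_le_mul_right h3 (lt_of_le_of_ne (norm_nonneg x) (Ne.symm h0))

lemma wot_closed_ball {H : Type*} [NormedAddCommGroup H] [InnerProductSpace ℂ H]
    (wot : TopologicalSpace (H →L[ℂ] H))
    (hwot : wot = ⨅ (ξ : H) (η : H),
      TopologicalSpace.induced (fun T : H →L[ℂ] H => ⟪T ξ, η⟫) inferInstance)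
    (ξ v : H) (c : ℝ) (hc : 0 ≤ c) :
    IsClosed[@instTopologicalSpaceSubtype _ _ wot]
      {A : {T : H →L[ℂ] H // ‖T‖ ≤ 1} | ‖A.1 ξ - v‖ ≤ c} := by
  letI := @instTopologicalSpaceSubtype (H →L[ℂ] H) (fun T => ‖T‖ ≤ 1) wot
  have hev : ∀ η : H, Continuous[wot, _] (fun T : H →L[ℂ] H => ⟪T ξ, η⟫) := by
    intro η
    rw [hwot]
    exact continuous_iInf_dom (continuous_iInf_dom continuous_induced_dom)
  have hval : Continuous[@instTopologicalSpaceSubtype _ _ wot, wot]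
      (Subtype.val : {T : H →L[ℂ] H // ‖T‖ ≤ 1} → (H →L[ℂ] H)) :=
    continuous_induced_dom
  have heq : {A : {T : H →L[ℂ] H // ‖T‖ ≤ 1} | ‖A.1 ξ - v‖ ≤ c}
      = ⋂ η : H, {A : {T : H →L[ℂ] H // ‖T‖ ≤ 1} | ‖⟪A.1 ξ, η⟫ - ⟪v, η⟫‖ ≤ c * ‖η‖} := by
    ext A
    simp only [Set.mem_setOf_eq, Set.mem_iInter, ← inner_sub_left]
    exact norm_le_iff_inner _ c hc
  rw [heq]
  refine isClosed_iInter fun η => ?_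
  have : Continuous (fun A : {T : H →L[ℂ] H // ‖T‖ ≤ 1} => ‖⟪A.1 ξ, η⟫ - ⟪v, η⟫‖) :=
    (((hev η).comp hval).sub continuous_const).norm
  exact isClosed_le this continuous_const

/-- Every subset of the unit ball of `B(H)` (`H` separable) that is open in the
strong operator topology is an `Fσ` set in the weak operator topology. -/
theorem stmt4 {H : Type*} [NormedAddCommGroup H] [InnerProductSpace ℂ H]
    [TopologicalSpace.SeparableSpace H]
    (sot wot : TopologicalSpace (H →L[ℂ] H))
    (hsot : sot = ⨅ (ξ : H),
      TopologicalSpace.induced (fun T : H →L[ℂ] H => T ξ) inferInstance)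
    (hwot : wot = ⨅ (ξ : H) (η : H),
      TopologicalSpace.induced (fun T : H →L[ℂ] H => ⟪T ξ, η⟫) inferInstance)
    (S : Set {T : H →L[ℂ] H // ‖T‖ ≤ 1})
    (hS : @IsOpen _ (@instTopologicalSpaceSubtype _ _ sot) S) :
    ∃ F : ℕ → Set {T : H →L[ℂ] H // ‖T‖ ≤ 1},
      (∀ n, @IsClosed _ (@instTopologicalSpaceSubtype _ _ wot) (F n)) ∧
      S = ⋃ n, F n := by
  classical
  obtain ⟨f, hf⟩ := exists_surjective_nat (Finset (ℕ × ℕ) × ℕ)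
  have : Nonempty H := ⟨0⟩
  have hdense : DenseRange (TopologicalSpace.denseSeq H) :=
    TopologicalSpace.denseRange_denseSeq H
  set d := TopologicalSpace.denseSeq H with hdd
  let C : Finset (ℕ × ℕ) × ℕ → Set {T : H →L[ℂ] H // ‖T‖ ≤ 1} := fun p =>
    {A | ∀ q ∈ p.1, ‖A.1 (d q.1) - d q.2‖ ≤ 1 / ((p.2 : ℝ) + 1)}
  let G : Finset (ℕ × ℕ) × ℕ → Set {T : H →L[ℂ] H // ‖T‖ ≤ 1} := fun p =>
    if C p ⊆ S then C p else ∅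
  have hr : ∀ k : ℕ, (0:ℝ) < 1 / ((k : ℝ) + 1) := fun k => by positivity
  have hCclosed : ∀ p, @IsClosed _ (@instTopologicalSpaceSubtype _ _ wot) (C p) := by
    intro p
    letI := @instTopologicalSpaceSubtype (H →L[ℂ] H) (fun T => ‖T‖ ≤ 1) wot
    have hCeq : C p = ⋂ q ∈ p.1,
        {A : {T : H →L[ℂ] H // ‖T‖ ≤ 1} | ‖A.1 (d q.1) - d q.2‖ ≤ 1 / ((p.2 : ℝ) + 1)} := by
      ext A; simp [C]
    rw [hCeq]
    exact isClosed_biInter fun q _ => wot_closed_ball wot hwot _ _ _ (hr p.2).le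
  have hGclosed : ∀ p, @IsClosed _ (@instTopologicalSpaceSubtype _ _ wot) (G p) := by
    intro p
    letI := @instTopologicalSpaceSubtype (H →L[ℂ] H) (fun T => ‖T‖ ≤ 1) wot
    by_cases h : C p ⊆ S
    · rw [show G p = C p from if_pos h]
      exact hCclosed p
    · rw [show G p = ∅ from if_neg h]
      exact isClosed_empty
  have hGsub : ∀ p, G p ⊆ S := by
    intro p
    by_cases h : C p ⊆ S <;> simp [G, h]
  have hcover : ∀ T ∈ S, ∃ p, T ∈ G p := by
    intro T hT
    have hS' : ∃ U, IsOpen[sot] U ∧ Subtype.val ⁻¹' U = S :=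
      (@isOpen_induced_iff _ _ sot S _).1 hS
    obtain ⟨U, hU, hUS⟩ := hS'
    have hTU : T.1 ∈ U := by rw [← hUS] at hT; exact hT
    have hU' : U ∈ @nhds _ sot T.1 := by
      letI := sot
      exact hU.mem_nhds hTU
    rw [hsot, nhds_iInf] at hU'
    simp only [nhds_induced] at hU'
    rw [Filter.mem_iInf'] at hU'
    obtain ⟨I, hIfin, V, hV, hVuniv, -, hUiInter⟩ := hU'
    have hball : ∀ ξ : H, ∃ ε > 0, ∀ A : H →L[ℂ] H, ‖A ξ - T.1 ξ‖ < ε → A ∈ V ξ := by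
      intro ξ
      obtain ⟨t, ht, hsub⟩ := Filter.mem_comap.1 (hV ξ)
      obtain ⟨ε, hε, hb⟩ := Metric.mem_nhds_iff.1 ht
      exact ⟨ε, hε, fun A hA => hsub (hb (by rwa [Metric.mem_ball, dist_eq_norm]))⟩
    choose ε hεpos hε using hball
    set F : Finset H := hIfin.toFinset with hF
    set ε₀ : ℝ := if h : F.Nonempty then F.inf' h ε else 1 with hε₀
    have hε₀pos : 0 < ε₀ := by
      rw [hε₀]
      split_ifs with h
      · rcases Finset.exists_mem_eq_inf' h ε with ⟨ξ, hξ, heq⟩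
        rw [heq]; exact hεpos ξ
      · norm_num
    have hε₀le : ∀ ξ ∈ F, ε₀ ≤ ε ξ := by
      intro ξ hξ
      rw [hε₀, dif_pos ⟨ξ, hξ⟩]
      exact Finset.inf'_le _ hξ
    obtain ⟨k, hk⟩ := exists_nat_one_div_lt (by positivity : (0:ℝ) < ε₀ / 8)
    set r : ℝ := 1 / ((k : ℝ) + 1) with hrdef
    have hrpos : 0 < r := hr k
    have hr8 : 8 * r < ε₀ := by linarith [hk]
    have happrox : ∀ x : H, ∃ n, ‖x - d n‖ < r := by
      intro x
      obtain ⟨n, hn⟩ := Metric.denseRange_iff.1 hdense x r hrpos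
      exact ⟨n, by rwa [← dist_eq_norm]⟩
    choose i hi using happrox
    refine ⟨(F.image (fun ξ => (i ξ, i (T.1 (d (i ξ))))), k), ?_⟩
    have hCsub : C (F.image (fun ξ => (i ξ, i (T.1 (d (i ξ))))), k) ⊆ S := by
      intro A hA
      have hAU : A.1 ∈ U := by
        rw [hUiInter, Set.mem_iInter]
        intro ξ
        by_cases hξI : ξ ∈ I
        · have hξF : ξ ∈ F := hIfin.mem_toFinset.2 hξI
          refine hε ξ A.1 ?_
          have hq : ‖A.1 (d (i ξ)) - d (i (T.1 (d (i ξ))))‖ ≤ r :=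
            hA _ (Finset.mem_image_of_mem _ hξF)
          have h1 : ‖A.1 ξ - A.1 (d (i ξ))‖ ≤ r := by
            rw [← map_sub]
            calc ‖A.1 (ξ - d (i ξ))‖ ≤ ‖A.1‖ * ‖ξ - d (i ξ)‖ := A.1.le_opNorm _
              _ ≤ 1 * ‖ξ - d (i ξ)‖ :=
                  mul_le_mul_of_nonneg_right A.2 (norm_nonneg _)
              _ ≤ r := by rw [one_mul]; exact (hi ξ).le
          have h4 : ‖T.1 (d (i ξ)) - T.1 ξ‖ ≤ r := by
            rw [← map_sub]
            calc ‖T.1 (d (i ξ) - ξ)‖ ≤ ‖T.1‖ * ‖d (i ξ) - ξ‖ := T.1.le_opNorm _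
              _ ≤ 1 * ‖d (i ξ) - ξ‖ :=
                  mul_le_mul_of_nonneg_right T.2 (norm_nonneg _)
              _ ≤ r := by rw [one_mul, norm_sub_rev]; exact (hi ξ).le
          have h3 : ‖d (i (T.1 (d (i ξ)))) - T.1 (d (i ξ))‖ ≤ r := by
            rw [norm_sub_rev]; exact (hi _).le
          have htri : ‖A.1 ξ - T.1 ξ‖ ≤ ‖A.1 ξ - A.1 (d (i ξ))‖
              + ‖A.1 (d (i ξ)) - d (i (T.1 (d (i ξ))))‖
              + ‖d (i (T.1 (d (i ξ)))) - T.1 (d (i ξ))‖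
              + ‖T.1 (d (i ξ)) - T.1 ξ‖ := by
            have t1 := dist_triangle4 (A.1 ξ) (A.1 (d (i ξ))) (d (i (T.1 (d (i ξ)))))
              (T.1 (d (i ξ)))
            have t2 := dist_triangle (A.1 ξ) (T.1 (d (i ξ))) (T.1 ξ)
            simp only [dist_eq_norm] at t1 t2
            linarith
          have hεξ : ε₀ ≤ ε ξ := hε₀le ξ hξF
          linarith
        · rw [hVuniv ξ hξI]; trivial
      rw [← hUS]
      exact hAU
    have hTC : T ∈ C (F.image (fun ξ => (i ξ, i (T.1 (d (i ξ))))), k) := by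
      intro q hq
      simp only [Finset.mem_image] at hq
      obtain ⟨ξ, hξ, rfl⟩ := hq
      exact (hi (T.1 (d (i ξ)))).le
    show T ∈ G _
    rw [show G (F.image (fun ξ => (i ξ, i (T.1 (d (i ξ))))), k)
        = C (F.image (fun ξ => (i ξ, i (T.1 (d (i ξ))))), k) from if_pos hCsub]
    exact hTC
  refine ⟨fun n => G (f n), fun n => hGclosed (f n), ?_⟩
  apply Set.Subset.antisymm
  · intro T hT
    obtain ⟨p, hp⟩ := hcover T hT
    obtain ⟨n, rfl⟩ := hf p
    exact Set.mem_iUnion.2 ⟨n, hp⟩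
  · exact Set.iUnion_subset fun n => hGsub (f n)
end

section
/- Let T ∈ B(H) with ‖T‖ ≤ 1, let T = u|T| be its polar decomposition with p = u*u, and let ξ ∈ H with ‖ξ‖ ≤ 1. If |⟨ξ, ξ⟩ − ⟨Tξ, Tξ⟩| < ε² for some 0 < ε < 1, then ‖ξ − pξ‖ < ε. -/
open scoped ComplexInnerProductSpace

/-- Let `‖T‖ ≤ 1`, and let `T = u P` be its polar decomposition
(`P = |T|` positive with `P² = T*T`, `p = u*u` the initial projection of the
partial isometry `u`, with `P p = P`, i.e. `p` fixes the closure of the range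
of `P`). If `‖ξ‖ ≤ 1` and `|⟪ξ, ξ⟫ - ⟪Tξ, Tξ⟫| < ε²` for some `0 < ε < 1`,
then `‖ξ - pξ‖ < ε`. -/
theorem stmt11 {H : Type*} [NormedAddCommGroup H] [InnerProductSpace ℂ H]
    [CompleteSpace H] (T u P p : H →L[ℂ] H)
    (hTnorm : ‖T‖ ≤ 1)
    (hPpos : P.IsPositive)
    (hPsq : P * P = ContinuousLinearMap.adjoint T * T)
    (hpolar : T = u * P)
    (hp : p = ContinuousLinearMap.adjoint u * u)
    (hproj : p * p = p) (hpsa : IsSelfAdjoint p)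
    (hPp : P * p = P)
    (ξ : H) (hξ : ‖ξ‖ ≤ 1)
    (ε : ℝ) (hε0 : 0 < ε) (hε1 : ε < 1)
    (hin : ‖⟪ξ, ξ⟫ - ⟪T ξ, T ξ⟫‖ < ε ^ 2) :
    ‖ξ - p ξ‖ < ε := by
  have hPsa : IsSelfAdjoint P := hPpos.isSelfAdjoint
  -- ‖P‖ ≤ 1
  have hPnorm : ‖P‖ ≤ 1 := by
    have h1 : ‖P * P‖ = ‖P‖ * ‖P‖ := by
      have := ContinuousLinearMap.norm_adjoint_comp_self P
      rwa [hPsa.adjoint_eq] at this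
    have h2 : ‖ContinuousLinearMap.adjoint T * T‖ = ‖T‖ * ‖T‖ :=
      ContinuousLinearMap.norm_adjoint_comp_self T
    have h3 : ‖P‖ * ‖P‖ ≤ 1 := by
      rw [← h1, hPsq, h2]
      exact mul_le_one₀ hTnorm (norm_nonneg T) hTnorm
    nlinarith [norm_nonneg P]
  -- ⟪Tξ, Tξ⟫ = ⟪Pξ, Pξ⟫
  have hTT : ⟪T ξ, T ξ⟫ = ⟪P ξ, P ξ⟫ := by
    have h1 : ⟪T ξ, T ξ⟫ = ⟪ξ, (ContinuousLinearMap.adjoint T * T) ξ⟫ := by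
      rw [ContinuousLinearMap.mul_apply, ContinuousLinearMap.adjoint_inner_right]
    rw [h1, ← hPsq, ContinuousLinearMap.mul_apply, ← hPsa.adjoint_eq,
      ContinuousLinearMap.adjoint_inner_right, hPsa.adjoint_eq]
  -- inner difference is real
  have hdiff : ⟪ξ, ξ⟫ - ⟪T ξ, T ξ⟫ = ((‖ξ‖ ^ 2 - ‖P ξ‖ ^ 2 : ℝ) : ℂ) := by
    rw [hTT, inner_self_eq_norm_sq_to_K, inner_self_eq_norm_sq_to_K]
    norm_cast
  -- ‖pξ‖² = re ⟪ξ, pξ⟫  via ⟪ξ, pξ⟫ = ⟪pξ, pξ⟫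
  have hip : ⟪ξ, p ξ⟫ = ⟪p ξ, p ξ⟫ := by
    have h1 : p ξ = p (p ξ) := by
      conv_lhs => rw [← hproj]
      rfl
    rw [h1, ← hpsa.adjoint_eq, ContinuousLinearMap.adjoint_inner_right, hpsa.adjoint_eq, ← h1]
  have hnorm2 : ‖ξ - p ξ‖ ^ 2 = ‖ξ‖ ^ 2 - ‖p ξ‖ ^ 2 := by
    have := @norm_sub_sq ℂ _ _ _ _ ξ (p ξ)
    rw [hip, inner_self_eq_norm_sq_to_K] at this
    rw [← RCLike.ofReal_pow, RCLike.ofReal_re] at this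
    linarith
  -- ‖Pξ‖ ≤ ‖pξ‖
  have hPle : ‖P ξ‖ ≤ ‖p ξ‖ := by
    have h1 : P ξ = P (p ξ) := by
      conv_lhs => rw [← hPp]
      rfl
    calc ‖P ξ‖ = ‖P (p ξ)‖ := by rw [h1]
      _ ≤ ‖P‖ * ‖p ξ‖ := P.le_opNorm _
      _ ≤ 1 * ‖p ξ‖ := by gcongr
      _ = ‖p ξ‖ := one_mul _
  -- conclude
  have hkey : ‖ξ - p ξ‖ ^ 2 < ε ^ 2 := by
    rw [hdiff] at hin
    rw [Complex.norm_real] at hin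
    have : ‖ξ‖ ^ 2 - ‖P ξ‖ ^ 2 < ε ^ 2 := lt_of_abs_lt hin
    nlinarith [norm_nonneg (P ξ), norm_nonneg (p ξ)]
  exact lt_of_pow_lt_pow_left₀ 2 hε0.le hkey
end

section
/- The set P₃ = {x ∈ 2^(ℕ×ℕ) : every row of x is eventually zero} continuously reduces to F₂: there is a continuous map f : 2^(ℕ×ℕ) → 2^(ℕ×ℕ) × 2^(ℕ×ℕ) such that x ∈ P₃ iff f(x) ∈ F₂. Concretely, fixing z ∈ 2^(ℕ×ℕ) whose rows enumerate all eventually-zero binary sequences, the map x ↦ (x ⊕ z, z) works, where (x⊕z)(2k+1,·) = x(k,·) and (x⊕z)(2k,·) = z(k,·). -/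
/-- The equivalence relation `F₂` on Cantor space `2^(ℕ×ℕ)`:
`x F₂ y` iff the set of rows of `x` equals the set of rows of `y`. -/
def F2 : Set ((ℕ × ℕ → Bool) × (ℕ × ℕ → Bool)) :=
  {p | Set.range (fun n => fun k => p.1 (n, k)) =
       Set.range (fun m => fun k => p.2 (m, k))}

/-- `P₃`: the set of `x ∈ 2^(ℕ×ℕ)` all of whose rows are eventually zero. -/
def P3 : Set (ℕ × ℕ → Bool) :=
  {x | ∀ n, ∃ k, ∀ m ≥ k, x (n, m) = false}

/-- The interleaving `x ⊕ z`: row `2k+1` is row `k` of `x`, and row `2k` is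
row `k` of `z`. -/
def oplus (x z : ℕ × ℕ → Bool) : ℕ × ℕ → Bool :=
  fun p => if p.1 % 2 = 1 then x (p.1 / 2, p.2) else z (p.1 / 2, p.2)

/-- `P₃` continuously reduces to `F₂`: if the rows of `z` enumerate exactly the
eventually-zero binary sequences, then the continuous map `x ↦ (x ⊕ z, z)`
satisfies `x ∈ P₃` iff `(x ⊕ z, z) ∈ F₂`. -/
theorem stmt19 (z : ℕ × ℕ → Bool)
    (hz : Set.range (fun n => fun k => z (n, k)) =
      {f : ℕ → Bool | ∃ k, ∀ m ≥ k, f m = false}) :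
    Continuous (fun x : ℕ × ℕ → Bool => ((oplus x z, z) :
      (ℕ × ℕ → Bool) × (ℕ × ℕ → Bool))) ∧
    ∀ x : ℕ × ℕ → Bool, x ∈ P3 ↔ (oplus x z, z) ∈ F2 := by
  constructor
  · apply Continuous.prodMk
    · apply continuous_pi
      intro p
      unfold oplus
      by_cases h : p.1 % 2 = 1
      · simp only [h, if_pos]
        exact continuous_apply _
      · simp only [h, if_neg, if_false]
        exact continuous_const
    · exact continuous_const
  · intro x
    constructor
    · intro hx
      show Set.range _ = Set.range _
      ext f
      simp only [Set.mem_range]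
      constructor
      · rintro ⟨n, rfl⟩
        rcases Nat.even_or_odd n with ⟨m, hm⟩ | ⟨m, hm⟩
        · refine ⟨m, ?_⟩
          funext k
          simp only [oplus, hm]
          have h1 : (m + m) % 2 = 0 := by omega
          have h2 : (m + m) / 2 = m := by omega
          simp [h1, h2]
        · have hmem : (fun k => x (m, k)) ∈ Set.range (fun n k => z (n, k)) := by
            rw [hz]; exact hx m
          obtain ⟨j, hj⟩ := hmem
          refine ⟨j, ?_⟩
          funext k
          simp only [oplus, hm]
          have h1 : (2 * m + 1) % 2 = 1 := by omega
          have h2 : (2 * m + 1) / 2 = m := by omega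
          simp only [h1, h2, if_pos]
          exact congrFun hj k
      · rintro ⟨m, rfl⟩
        refine ⟨2 * m, ?_⟩
        funext k
        simp only [oplus]
        have h1 : (2 * m) % 2 = 0 := by omega
        have h2 : (2 * m) / 2 = m := by omega
        simp [h1, h2]
    · intro h n
      have hmem : (fun k => x (n, k)) ∈ Set.range (fun m k => z (m, k)) := by
        rw [← h]
        refine ⟨2 * n + 1, ?_⟩
        funext k
        simp only [oplus]
        have h1 : (2 * n + 1) % 2 = 1 := by omega
        have h2 : (2 * n + 1) / 2 = n := by omega
        simp [h1, h2]
      rw [hz] at hmem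
      exact hmem
end
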